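/- arXiv:math/0506186 — 4 statements merged into one kernel-verified Lean document; each statement's English description precedes it below -/
import Mathlib

section
/- For every N ∈ ℕ, every a, b > 0 and all x, z ∈ ℝ^N_<, the Karlin–McGregor determinants satisfy the semigroup (Chapman–Kolmogorov) property on the Weyl chamber: ∫_{ℝ^N_<} f_N(a; x, y) f_N(b; y, z) dy = f_N(a+b; x, z). -/
open MeasureTheory

/-- The heat kernel `p_t(x,y) = (2πt)^{-1/2} exp(-(x-y)²/(2t))`. -/
noncomputable def heatKernel (t x y : ℝ) : ℝ :=
  (1 / Real.sqrt (2 * Real.pi * t)) * Real.exp (-(x - y)^2 / (2 * t))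

/-- The Weyl chamber `ℝ^N_< = {x : x_1 < x_2 < ⋯ < x_N}`. -/
def weylChamber (N : ℕ) : Set (Fin N → ℝ) := {x | StrictMono x}

/-- The Karlin–McGregor determinant `f_N(t; x, y) = det[p_t(x_i, y_j)]`. -/
noncomputable def fKM (N : ℕ) (t : ℝ) (x y : Fin N → ℝ) : ℝ :=
  Matrix.det (Matrix.of fun i j => heatKernel t (x i) (y j))

/-- The non-colliding probability `𝒩_N(t; x) = ∫_{ℝ^N_<} f_N(t; x, y) dy`. -/
noncomputable def NKM (N : ℕ) (t : ℝ) (x : Fin N → ℝ) : ℝ :=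
  ∫ y in weylChamber N, fKM N t x y

namespace KMCK

open Real Equiv

set_option maxHeartbeats 1000000

lemma hk_decomp {a b : ℝ} (ha : 0 < a) (hb : 0 < b) (x z y : ℝ) :
    heatKernel a x y * heatKernel b y z =
      (heatKernel (a + b) x z * Real.sqrt ((a + b) / (2 * Real.pi * (a * b)))) *
        Real.exp (-((a + b) / (2 * (a * b))) * (y - (b * x + a * z) / (a + b))^2) := by
  have hπ := Real.pi_pos
  have hab : 0 < a + b := by linarith
  have hc : (1 / Real.sqrt (2 * Real.pi * a)) * (1 / Real.sqrt (2 * Real.pi * b)) =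
      (1 / Real.sqrt (2 * Real.pi * (a + b))) * Real.sqrt ((a + b) / (2 * Real.pi * (a * b))) := by
    rw [div_mul_div_comm, one_mul, div_mul_eq_mul_div, one_mul,
      ← Real.sqrt_mul (by positivity), ← Real.sqrt_div (by positivity),
      show (a + b) / (2 * Real.pi * (a * b)) / (2 * Real.pi * (a + b)) =
        (2 * Real.pi * a * (2 * Real.pi * b))⁻¹ by field_simp,
      Real.sqrt_inv, one_div]
  have he : Real.exp (-(x - y)^2 / (2 * a)) * Real.exp (-(y - z)^2 / (2 * b)) =
      Real.exp (-(x - z)^2 / (2 * (a + b))) *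
        Real.exp (-((a + b) / (2 * (a * b))) * (y - (b * x + a * z) / (a + b))^2) := by
    rw [← Real.exp_add, ← Real.exp_add]
    congr 1
    field_simp
    ring
  unfold heatKernel
  calc (1 / Real.sqrt (2 * Real.pi * a)) * Real.exp (-(x - y)^2 / (2 * a)) *
        ((1 / Real.sqrt (2 * Real.pi * b)) * Real.exp (-(y - z)^2 / (2 * b)))
      = ((1 / Real.sqrt (2 * Real.pi * a)) * (1 / Real.sqrt (2 * Real.pi * b))) *
        (Real.exp (-(x - y)^2 / (2 * a)) * Real.exp (-(y - z)^2 / (2 * b))) := by ring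
    _ = _ := by rw [hc, he]; ring

lemma hk_mul_integrable {a b : ℝ} (ha : 0 < a) (hb : 0 < b) (x z : ℝ) :
    Integrable (fun y => heatKernel a x y * heatKernel b y z) := by
  have hc : (0:ℝ) < (a + b) / (2 * (a * b)) := by positivity
  simp_rw [hk_decomp ha hb x z]
  exact (((integrable_exp_neg_mul_sq hc).comp_sub_right ((b * x + a * z) / (a + b))).const_mul _)

lemma hk_ck {a b : ℝ} (ha : 0 < a) (hb : 0 < b) (x z : ℝ) :
    ∫ y, heatKernel a x y * heatKernel b y z = heatKernel (a + b) x z := by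
  have hπ := Real.pi_pos
  have hc : (0:ℝ) < (a + b) / (2 * (a * b)) := by positivity
  simp_rw [hk_decomp ha hb x z]
  rw [MeasureTheory.integral_const_mul, integral_sub_right_eq_self
    (fun u => Real.exp (-((a + b) / (2 * (a * b))) * u ^ 2)) ((b * x + a * z) / (a + b)),
    integral_gaussian]
  rw [mul_assoc, ← Real.sqrt_mul (by positivity),
    show (a + b) / (2 * Real.pi * (a * b)) * (Real.pi / ((a + b) / (2 * (a * b)))) = 1 from
      (by field_simp), Real.sqrt_one, mul_one]

section
variable {N : ℕ} {a b : ℝ}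

local notation "ε" σ => ((Equiv.Perm.sign σ : ℤ) : ℝ)

lemma fKM_expand1 (x : Fin N → ℝ) (t : ℝ) (y : Fin N → ℝ) :
    fKM N t x y = ∑ σ : Perm (Fin N), (ε σ) * ∏ i, heatKernel t (x (σ i)) (y i) := by
  rw [fKM, Matrix.det_apply']
  rfl

lemma fKM_expand2 (x : Fin N → ℝ) (t : ℝ) (y : Fin N → ℝ) :
    fKM N t x y = ∑ σ : Perm (Fin N), (ε σ) * ∏ i, heatKernel t (x i) (y (σ i)) := by
  rw [fKM, ← Matrix.det_transpose, Matrix.det_apply']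
  rfl

lemma phi_expand (x z y : Fin N → ℝ) :
    fKM N a x y * fKM N b y z = ∑ σ : Perm (Fin N), ∑ τ : Perm (Fin N),
      ((ε σ) * (ε τ)) * ∏ i, (heatKernel a (x (σ i)) (y i) * heatKernel b (y i) (z (τ i))) := by
  rw [fKM_expand1 x a y, fKM_expand2 y b z, Finset.sum_mul_sum]
  refine Finset.sum_congr rfl fun σ _ => Finset.sum_congr rfl fun τ _ => ?_
  rw [Finset.prod_mul_distrib]
  ring

lemma phi_integrable (ha : 0 < a) (hb : 0 < b) (x z : Fin N → ℝ) :
    Integrable (fun y : Fin N → ℝ => fKM N a x y * fKM N b y z) := by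
  have h : (fun y : Fin N → ℝ => fKM N a x y * fKM N b y z) =
      fun y => ∑ σ : Perm (Fin N), ∑ τ : Perm (Fin N),
        ((ε σ) * (ε τ)) * ∏ i, (heatKernel a (x (σ i)) (y i) * heatKernel b (y i) (z (τ i))) :=
    funext fun y => phi_expand x z y
  rw [h]
  refine integrable_finset_sum _ fun σ _ => integrable_finset_sum _ fun τ _ => ?_
  exact (Integrable.fintype_prod_dep fun i =>
    hk_mul_integrable ha hb (x (σ i)) (z (τ i))).const_mul _

lemma sign_mul_sign_mul (σ ρ : Perm (Fin N)) :
    (ε σ) * (ε (ρ * σ)) = ε ρ := by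
  calc (ε σ) * (ε (ρ * σ)) = (ε σ) * ((ε ρ) * (ε σ)) := by
        rw [Equiv.Perm.sign_mul, Units.val_mul, Int.cast_mul]
    _ = (ε ρ) * ((ε σ) * (ε σ)) := by ring
    _ = ε ρ := by
        rw [← Int.cast_mul, ← Units.val_mul, Int.units_mul_self, Units.val_one, Int.cast_one,
          mul_one]

lemma integral_phi (ha : 0 < a) (hb : 0 < b) (x z : Fin N → ℝ) :
    ∫ y : Fin N → ℝ, fKM N a x y * fKM N b y z = (N.factorial : ℝ) * fKM N (a + b) x z := by
  have h : (fun y : Fin N → ℝ => fKM N a x y * fKM N b y z) =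
      fun y => ∑ σ : Perm (Fin N), ∑ τ : Perm (Fin N),
        ((ε σ) * (ε τ)) * ∏ i, (heatKernel a (x (σ i)) (y i) * heatKernel b (y i) (z (τ i))) :=
    funext fun y => phi_expand x z y
  have hint : ∀ (σ τ : Perm (Fin N)), Integrable (fun y : Fin N → ℝ =>
      ((ε σ) * (ε τ)) * ∏ i, (heatKernel a (x (σ i)) (y i) * heatKernel b (y i) (z (τ i)))) :=
    fun σ τ => (Integrable.fintype_prod_dep fun i =>
      hk_mul_integrable ha hb (x (σ i)) (z (τ i))).const_mul _
  rw [h, integral_finset_sum _ fun σ _ => integrable_finset_sum _ fun τ _ => hint σ τ]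
  have step1 : ∀ σ : Perm (Fin N), (∫ y : Fin N → ℝ, ∑ τ : Perm (Fin N),
      ((ε σ) * (ε τ)) * ∏ i, (heatKernel a (x (σ i)) (y i) * heatKernel b (y i) (z (τ i)))) =
      ∑ τ : Perm (Fin N), ((ε σ) * (ε τ)) * ∏ i, heatKernel (a + b) (x (σ i)) (z (τ i)) := by
    intro σ
    rw [integral_finset_sum _ fun τ _ => hint σ τ]
    refine Finset.sum_congr rfl fun τ _ => ?_
    rw [MeasureTheory.integral_const_mul,
      MeasureTheory.integral_fintype_prod_volume_eq_prod (ι := Fin N)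
        (f := fun i t => heatKernel a (x (σ i)) t * heatKernel b t (z (τ i)))]
    congr 1
    exact Finset.prod_congr rfl fun i _ => hk_ck ha hb _ _
  have step2 : ∀ σ : Perm (Fin N),
      (∑ τ : Perm (Fin N), ((ε σ) * (ε τ)) * ∏ i, heatKernel (a + b) (x (σ i)) (z (τ i))) =
      fKM N (a + b) x z := by
    intro σ
    rw [← Equiv.sum_comp (Equiv.mulRight σ)
      (fun τ => ((ε σ) * (ε τ)) * ∏ i, heatKernel (a + b) (x (σ i)) (z (τ i)))]
    rw [fKM_expand2 x (a + b) z]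
    refine Finset.sum_congr rfl fun ρ _ => ?_
    simp only [Equiv.coe_mulRight, Equiv.Perm.mul_apply]
    rw [sign_mul_sign_mul σ ρ, Equiv.prod_comp σ
      (fun j => heatKernel (a + b) (x j) (z (ρ j)))]
  calc (∑ σ : Perm (Fin N), ∫ y : Fin N → ℝ, ∑ τ : Perm (Fin N),
        ((ε σ) * (ε τ)) * ∏ i, (heatKernel a (x (σ i)) (y i) * heatKernel b (y i) (z (τ i))))
      = ∑ _σ : Perm (Fin N), fKM N (a + b) x z :=
        Finset.sum_congr rfl fun σ _ => (step1 σ).trans (step2 σ)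
    _ = (N.factorial : ℝ) * fKM N (a + b) x z := by
        rw [Finset.sum_const, Finset.card_univ, Fintype.card_perm, Fintype.card_fin,
          nsmul_eq_mul]

/-- permuting the second argument of `fKM` multiplies by the sign. -/
lemma fKM_comp_right (t : ℝ) (x y : Fin N → ℝ) (σ : Perm (Fin N)) :
    fKM N t x (y ∘ σ) = (ε σ) * fKM N t x y := by
  have : (Matrix.of fun i j => heatKernel t (x i) ((y ∘ σ) j)) =
      (Matrix.of fun i j => heatKernel t (x i) (y j)).submatrix id σ := rfl
  rw [fKM, this, Matrix.det_permute']
  rfl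

lemma fKM_comp_left (t : ℝ) (x y : Fin N → ℝ) (σ : Perm (Fin N)) :
    fKM N t (x ∘ σ) y = (ε σ) * fKM N t x y := by
  have : (Matrix.of fun i j => heatKernel t ((x ∘ σ) i) (y j)) =
      (Matrix.of fun i j => heatKernel t (x i) (y j)).submatrix σ id := rfl
  rw [fKM, this, Matrix.det_permute]
  rfl

lemma phi_comp_perm (x z : Fin N → ℝ) (σ : Perm (Fin N)) (y : Fin N → ℝ) :
    fKM N a x (y ∘ σ) * fKM N b (y ∘ σ) z = fKM N a x y * fKM N b y z := by
  rw [fKM_comp_right a x y σ, fKM_comp_left b y z σ]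
  have : ((ε σ)) * ((ε σ)) = 1 := by
    rw [← Int.cast_mul, ← Units.val_mul, Int.units_mul_self, Units.val_one, Int.cast_one]
  calc ((ε σ) * fKM N a x y) * ((ε σ) * fKM N b y z)
      = ((ε σ) * (ε σ)) * (fKM N a x y * fKM N b y z) := by ring
    _ = _ := by rw [this, one_mul]

lemma measurable_W (σ : Perm (Fin N)) :
    MeasurableSet {y : Fin N → ℝ | StrictMono (y ∘ σ)} := by
  have : {y : Fin N → ℝ | StrictMono (y ∘ σ)} =
      ⋂ i, ⋂ j, ⋂ (_ : i < j), {y : Fin N → ℝ | y (σ i) < y (σ j)} := by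
    ext y
    simp only [Set.mem_setOf_eq, Set.mem_iInter]
    exact ⟨fun h i j hij => h hij, fun h i j hij => h i j hij⟩
  rw [this]
  exact MeasurableSet.iInter fun i => MeasurableSet.iInter fun j =>
    MeasurableSet.iInter fun _ =>
      measurableSet_lt (measurable_pi_apply _) (measurable_pi_apply _)

lemma disjoint_W : Pairwise (Function.onFun Disjoint
    (fun σ : Perm (Fin N) => {y : Fin N → ℝ | StrictMono (y ∘ σ)})) := by
  intro σ τ hστ
  rw [Function.onFun, Set.disjoint_left]
  intro y h1 h2
  have h1' : StrictMono (y ∘ σ) := h1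
  have h2' : StrictMono (y ∘ τ) := h2
  have heq : y ∘ σ = y ∘ τ := Tuple.unique_monotone h1'.monotone h2'.monotone
  have hyinj : Function.Injective y := by
    intro u v huv
    have : (y ∘ σ) (σ.symm u) = (y ∘ σ) (σ.symm v) := by
      simp only [Function.comp_apply, Equiv.apply_symm_apply]; exact huv
    have := h1'.injective this
    simpa using congrArg σ this
  exact hστ (Equiv.ext fun i => hyinj (congrFun heq i))

lemma cover_W : {y : Fin N → ℝ | Function.Injective y} ⊆
    ⋃ σ : Perm (Fin N), {y : Fin N → ℝ | StrictMono (y ∘ σ)} := by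
  intro y hy
  refine Set.mem_iUnion.2 ⟨Tuple.sort y, ?_⟩
  exact (Tuple.monotone_sort y).strictMono_of_injective (hy.comp (Tuple.sort y).injective)

lemma null_noninj : (volume : Measure (Fin N → ℝ))
    {y : Fin N → ℝ | ¬ Function.Injective y} = 0 := by
  have hsub : {y : Fin N → ℝ | ¬ Function.Injective y} ⊆
      ⋃ i, ⋃ j, ⋃ (_ : i ≠ j), {y : Fin N → ℝ | y i = y j} := by
    intro y hy
    simp only [Function.Injective, not_forall] at hy
    obtain ⟨i, j, hij, hne⟩ := hy
    exact Set.mem_iUnion.2 ⟨i, Set.mem_iUnion.2 ⟨j, Set.mem_iUnion.2 ⟨hne, hij⟩⟩⟩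
  refine measure_mono_null hsub ?_
  refine measure_iUnion_null fun i => measure_iUnion_null fun j => measure_iUnion_null fun hij => ?_
  have : {y : Fin N → ℝ | y i = y j} = (LinearMap.ker
      ((LinearMap.proj i : (Fin N → ℝ) →ₗ[ℝ] ℝ) - LinearMap.proj j) : Submodule ℝ (Fin N → ℝ)) := by
    ext y
    simp [LinearMap.mem_ker, sub_eq_zero]
  rw [this]
  refine Measure.addHaar_submodule _ _ ?_
  intro htop
  have hmem := (Submodule.eq_top_iff'.mp htop) (Pi.single i 1)
  simp only [LinearMap.mem_ker, LinearMap.sub_apply, LinearMap.proj_apply] at hmem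
  rw [Pi.single_eq_same, Pi.single_eq_of_ne (Ne.symm hij)] at hmem
  norm_num at hmem

lemma setIntegral_W_eq (x z : Fin N → ℝ) (σ : Perm (Fin N)) :
    ∫ y in {y : Fin N → ℝ | StrictMono (y ∘ σ)}, fKM N a x y * fKM N b y z =
      ∫ y in weylChamber N, fKM N a x y * fKM N b y z := by
  have hmp := MeasureTheory.volume_measurePreserving_piCongrLeft (fun _ : Fin N => ℝ)
    (σ : Fin N ≃ Fin N)
  have hemb := (MeasurableEquiv.piCongrLeft (fun _ : Fin N => ℝ)
    (σ : Fin N ≃ Fin N)).measurableEmbedding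
  have key := hmp.setIntegral_preimage_emb hemb
    (fun y => fKM N a x y * fKM N b y z) {y : Fin N → ℝ | StrictMono (y ∘ σ)}
  have hT : ∀ f : Fin N → ℝ,
      (MeasurableEquiv.piCongrLeft (fun _ : Fin N => ℝ) (σ : Fin N ≃ Fin N)) f = f ∘ ⇑σ.symm := by
    intro f
    funext j
    have : j = σ (σ.symm j) := (Equiv.apply_symm_apply σ j).symm
    rw [this]
    rw [MeasurableEquiv.piCongrLeft_apply_apply]; simp
  have hpre : (MeasurableEquiv.piCongrLeft (fun _ : Fin N => ℝ) (σ : Fin N ≃ Fin N)) ⁻¹'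
      {y : Fin N → ℝ | StrictMono (y ∘ σ)} = weylChamber N := by
    ext f
    simp only [Set.mem_preimage, Set.mem_setOf_eq, hT f, weylChamber]
    have : (f ∘ ⇑σ.symm) ∘ ⇑σ = f := by funext i; simp
    rw [this]
  rw [← key, hpre]
  refine setIntegral_congr_fun (by
    have : weylChamber N = {y : Fin N → ℝ | StrictMono (y ∘ (1 : Perm (Fin N)))} := rfl
    rw [this]; exact measurable_W 1) ?_
  intro f _
  simp only [hT f]
  have : f = (f ∘ ⇑σ.symm) ∘ ⇑σ := by funext i; simp
  conv_rhs => rw [this]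
  rw [phi_comp_perm x z σ (f ∘ ⇑σ.symm)]

end

end KMCK

/-- Chapman–Kolmogorov (semigroup) property of the Karlin–McGregor determinants
on the Weyl chamber. -/
theorem karlinMcGregor_chapman_kolmogorov (N : ℕ) (a b : ℝ) (ha : 0 < a) (hb : 0 < b)
    (x z : Fin N → ℝ) (hx : x ∈ weylChamber N) (hz : z ∈ weylChamber N) :
    ∫ y in weylChamber N, fKM N a x y * fKM N b y z = fKM N (a + b) x z := by
  classical
  set W : Equiv.Perm (Fin N) → Set (Fin N → ℝ) :=
    fun σ => {y : Fin N → ℝ | StrictMono (y ∘ σ)} with hW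
  set U : Set (Fin N → ℝ) := ⋃ σ : Equiv.Perm (Fin N), W σ with hU
  have hU0 : (volume : Measure (Fin N → ℝ)) Uᶜ = 0 := by
    refine measure_mono_null ?_ KMCK.null_noninj
    intro y hy
    intro hinj
    exact hy (KMCK.cover_W hinj)
  have hfull : ∫ y : Fin N → ℝ, fKM N a x y * fKM N b y z =
      ∫ y in U, fKM N a x y * fKM N b y z := by
    rw [← MeasureTheory.setIntegral_univ]
    exact MeasureTheory.setIntegral_congr_set (MeasureTheory.ae_eq_univ.2 hU0).symm
  have hsplit : ∫ y in U, fKM N a x y * fKM N b y z =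
      ∑ σ : Equiv.Perm (Fin N), ∫ y in W σ, fKM N a x y * fKM N b y z :=
    MeasureTheory.integral_iUnion_fintype (fun σ => KMCK.measurable_W σ) KMCK.disjoint_W
      (fun σ => (KMCK.phi_integrable ha hb x z).integrableOn)
  have hWeq : ∀ σ : Equiv.Perm (Fin N),
      ∫ y in W σ, fKM N a x y * fKM N b y z =
        ∫ y in weylChamber N, fKM N a x y * fKM N b y z :=
    fun σ => KMCK.setIntegral_W_eq x z σ
  have hsum : ∫ y : Fin N → ℝ, fKM N a x y * fKM N b y z =
      (N.factorial : ℝ) * ∫ y in weylChamber N, fKM N a x y * fKM N b y z := by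
    rw [hfull, hsplit]
    calc (∑ σ : Equiv.Perm (Fin N), ∫ y in W σ, fKM N a x y * fKM N b y z)
        = ∑ _σ : Equiv.Perm (Fin N), ∫ y in weylChamber N, fKM N a x y * fKM N b y z :=
          Finset.sum_congr rfl fun σ _ => hWeq σ
      _ = _ := by
          rw [Finset.sum_const, Finset.card_univ, Fintype.card_perm, Fintype.card_fin,
            nsmul_eq_mul]
  have hmain := KMCK.integral_phi ha hb x z
  have hfac : (N.factorial : ℝ) ≠ 0 := Nat.cast_ne_zero.2 N.factorial_ne_zero
  apply mul_left_cancel₀ hfac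
  rw [← hsum, hmain]
end

section
/- For every N ∈ ℕ, every a, b > 0 and every x ∈ ℝ^N, ∫_{ℝ^N_<} f_N(a; x, y) 𝒩_N(b; y) dy = 𝒩_N(a+b; x). -/
open MeasureTheory

namespace KMAux

open Real Finset

/-! ### Heat kernel basics -/

lemma hk_eq (t x y : ℝ) :
    heatKernel t x y = (1 / Real.sqrt (2 * Real.pi * t)) * Real.exp (-(1/(2*t)) * (y - x)^2) := by
  unfold heatKernel
  congr 1
  · ring_nf

lemma hk_nonneg (t x y : ℝ) : 0 ≤ heatKernel t x y := by
  unfold heatKernel; positivity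

lemma hk_continuous2 {α : Type*} [TopologicalSpace α] (t : ℝ) {f g : α → ℝ}
    (hf : Continuous f) (hg : Continuous g) : Continuous (fun p => heatKernel t (f p) (g p)) := by
  unfold heatKernel; fun_prop

lemma integrable_hk {t : ℝ} (ht : 0 < t) (x : ℝ) : Integrable (fun y => heatKernel t x y) := by
  simp_rw [hk_eq]
  exact ((integrable_exp_neg_mul_sq (by positivity : (0:ℝ) < 1/(2*t))).comp_sub_right x).const_mul _

lemma integral_hk {t : ℝ} (ht : 0 < t) (x : ℝ) : ∫ y, heatKernel t x y = 1 := by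
  simp_rw [hk_eq]
  rw [integral_const_mul]
  have h0 : ∫ (y : ℝ), Real.exp (-(1/(2*t)) * (y - x)^2) = ∫ (y : ℝ), Real.exp (-(1/(2*t)) * y^2) :=
    integral_sub_right_eq_self (fun u => Real.exp (-(1/(2*t)) * u^2)) x
  rw [h0, integral_gaussian]
  have h1 : π / (1/(2*t)) = 2 * π * t := by field_simp
  rw [h1, one_div_mul_eq_div, div_self]
  positivity

lemma hk_mul {a b : ℝ} (ha : 0 < a) (hb : 0 < b) (x z u : ℝ) :
    heatKernel a x u * heatKernel b u z
      = heatKernel (a+b) x z * heatKernel (a*b/(a+b)) ((b*x+a*z)/(a+b)) u := by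
  have hab : 0 < a + b := by linarith
  unfold heatKernel
  have key : ∀ s1 e1 s2 e2 : ℝ, (1/s1*e1)*(1/s2*e2) = (1/(s1*s2))*(e1*e2) := by
    intros; ring
  rw [key, key]
  congr 1
  · rw [← Real.sqrt_mul (by positivity), ← Real.sqrt_mul (by positivity)]
    congr 1
    field_simp
  · rw [← Real.exp_add, ← Real.exp_add]
    congr 1
    field_simp
    ring

lemma integrable_hk_mul {a b : ℝ} (ha : 0 < a) (hb : 0 < b) (x z : ℝ) :
    Integrable (fun u => heatKernel a x u * heatKernel b u z) := by
  simp_rw [hk_mul ha hb x z]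
  have hab : 0 < a + b := by linarith
  exact (integrable_hk (by positivity) _).const_mul _

lemma hk_conv {a b : ℝ} (ha : 0 < a) (hb : 0 < b) (x z : ℝ) :
    ∫ u, heatKernel a x u * heatKernel b u z = heatKernel (a+b) x z := by
  simp_rw [hk_mul ha hb x z]
  have hab : 0 < a + b := by linarith
  rw [integral_const_mul, integral_hk (by positivity), mul_one]

/-! ### Determinant algebra -/

lemma sum_sum_perm {N : ℕ} (K : Matrix (Fin N) (Fin N) ℝ) :
    ∑ σ : Equiv.Perm (Fin N), ∑ τ : Equiv.Perm (Fin N),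
      ((Equiv.Perm.sign σ : ℤ) : ℝ) * ((Equiv.Perm.sign τ : ℤ) : ℝ) * ∏ i, K (σ i) (τ i)
      = (N.factorial : ℝ) * K.det := by
  have inner : ∀ σ : Equiv.Perm (Fin N),
      ∑ τ : Equiv.Perm (Fin N),
        ((Equiv.Perm.sign σ : ℤ) : ℝ) * ((Equiv.Perm.sign τ : ℤ) : ℝ) * ∏ i, K (σ i) (τ i)
        = K.det := by
    intro σ
    rw [← Equiv.sum_comp (Equiv.mulRight σ) (fun τ => ((Equiv.Perm.sign σ : ℤ) : ℝ) *
      ((Equiv.Perm.sign τ : ℤ) : ℝ) * ∏ i, K (σ i) (τ i))]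
    have h : ∀ ρ : Equiv.Perm (Fin N),
        ((Equiv.Perm.sign σ : ℤ) : ℝ) * ((Equiv.Perm.sign (Equiv.mulRight σ ρ) : ℤ) : ℝ) *
          ∏ i, K (σ i) ((Equiv.mulRight σ ρ) i)
        = ((Equiv.Perm.sign ρ : ℤ) : ℝ) * ∏ i, K i (ρ i) := by
      intro ρ
      have h1 : (Equiv.mulRight σ ρ) = ρ * σ := rfl
      have h2 : ∏ i, K (σ i) ((ρ * σ) i) = ∏ i, K i (ρ i) := by
        rw [← Equiv.prod_comp σ (fun i => K i (ρ i))]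
        rfl
      rw [h1, h2, Equiv.Perm.sign_mul]
      push_cast
      have hs : ((Equiv.Perm.sign σ : ℤ) : ℝ) * ((Equiv.Perm.sign σ : ℤ) : ℝ) = 1 := by
        rcases Int.units_eq_one_or (Equiv.Perm.sign σ) with h | h <;> rw [h] <;> norm_num
      calc ((Equiv.Perm.sign σ : ℤ) : ℝ) *
            (((Equiv.Perm.sign ρ : ℤ) : ℝ) * ((Equiv.Perm.sign σ : ℤ) : ℝ)) * ∏ i, K i (ρ i)
          = (((Equiv.Perm.sign σ : ℤ) : ℝ) * ((Equiv.Perm.sign σ : ℤ) : ℝ)) *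
            ((Equiv.Perm.sign ρ : ℤ) : ℝ) * ∏ i, K i (ρ i) := by ring
        _ = _ := by rw [hs]; ring
    simp_rw [h]
    rw [← Matrix.det_transpose]
    rw [Matrix.det_apply]
    congr 1
    ext ρ
    simp [Matrix.transpose_apply, Units.smul_def, zsmul_eq_mul]
  simp_rw [inner, Finset.sum_const, Finset.card_univ, Fintype.card_perm, Fintype.card_fin,
    nsmul_eq_mul]

lemma fKM_expand {N : ℕ} (a b : ℝ) (x z y : Fin N → ℝ) :
    fKM N a x y * fKM N b y z
      = ∑ σ : Equiv.Perm (Fin N), ∑ τ : Equiv.Perm (Fin N),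
          (((Equiv.Perm.sign σ : ℤ) : ℝ) * ((Equiv.Perm.sign τ : ℤ) : ℝ)) *
            ∏ i, (heatKernel a (x (σ i)) (y i) * heatKernel b (y i) (z (τ i))) := by
  unfold fKM
  rw [show (Matrix.of fun i j => heatKernel b (y i) (z j)).det
      = (Matrix.transpose (Matrix.of fun i j => heatKernel b (y i) (z j))).det from
      (Matrix.det_transpose _).symm]
  rw [Matrix.det_apply, Matrix.det_apply, Finset.sum_mul_sum]
  refine Finset.sum_congr rfl fun σ _ => Finset.sum_congr rfl fun τ _ => ?_
  simp only [Matrix.transpose_apply, Matrix.of_apply, Units.smul_def, zsmul_eq_mul,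
    Finset.prod_mul_distrib]
  ring

lemma fKM_perm_left {N : ℕ} (t : ℝ) (x y : Fin N → ℝ) (σ : Equiv.Perm (Fin N)) :
    fKM N t x (y ∘ σ) = ((Equiv.Perm.sign σ : ℤ) : ℝ) * fKM N t x y := by
  unfold fKM
  have h : (Matrix.of fun i j => heatKernel t (x i) ((y ∘ σ) j))
      = (Matrix.of fun i j => heatKernel t (x i) (y j)).submatrix id σ := rfl
  rw [h, Matrix.det_permute']

lemma fKM_perm_right {N : ℕ} (t : ℝ) (y z : Fin N → ℝ) (σ : Equiv.Perm (Fin N)) :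
    fKM N t (y ∘ σ) z = ((Equiv.Perm.sign σ : ℤ) : ℝ) * fKM N t y z := by
  unfold fKM
  have h : (Matrix.of fun i j => heatKernel t ((y ∘ σ) i) (z j))
      = (Matrix.of fun i j => heatKernel t (y i) (z j)).submatrix σ id := rfl
  rw [h, Matrix.det_permute]

/-! ### Measurability of the Weyl chamber; null set of non-injective tuples -/

lemma measurableSet_weylChamber (N : ℕ) : MeasurableSet (weylChamber N) := by
  have h : weylChamber N = ⋂ (i : Fin N) (j : Fin N) (_ : i < j), {y : Fin N → ℝ | y i < y j} := by
    ext y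
    simp only [weylChamber, Set.mem_setOf_eq, Set.mem_iInter]
    exact ⟨fun h i j hij => h hij, fun h _ _ hij => h _ _ hij⟩
  rw [h]
  exact MeasurableSet.iInter fun i => MeasurableSet.iInter fun j => MeasurableSet.iInter fun _ =>
    measurableSet_lt (measurable_pi_apply i) (measurable_pi_apply j)

lemma null_noninj (N : ℕ) :
    volume {y : Fin N → ℝ | ¬ Function.Injective y} = 0 := by
  have key : ∀ i j : Fin N, i ≠ j → volume {y : Fin N → ℝ | y i = y j} = 0 := by
    intro i j hij
    set φ : (Fin N → ℝ) →ₗ[ℝ] ℝ :=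
      (LinearMap.proj i : (Fin N → ℝ) →ₗ[ℝ] ℝ) - (LinearMap.proj j : (Fin N → ℝ) →ₗ[ℝ] ℝ) with hφ
    have hset : {y : Fin N → ℝ | y i = y j} = (LinearMap.ker φ : Set (Fin N → ℝ)) := by
      ext y
      simp [hφ, LinearMap.mem_ker, sub_eq_zero]
    rw [hset]
    apply MeasureTheory.Measure.addHaar_submodule
    intro h
    have hzero : φ = 0 := LinearMap.ker_eq_top.1 h
    have h1 : φ (Pi.single i 1) = 1 := by
      simp [hφ, Pi.single_eq_same, Pi.single_eq_of_ne (Ne.symm hij)]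
    rw [hzero] at h1
    simp at h1
  have hsub : {y : Fin N → ℝ | ¬ Function.Injective y} ⊆
      ⋃ (p : Fin N × Fin N) (_ : p.1 ≠ p.2), {y : Fin N → ℝ | y p.1 = y p.2} := by
    intro y hy
    simp only [Set.mem_setOf_eq, Function.Injective, not_forall] at hy
    obtain ⟨i, j, hij, hne⟩ := hy
    exact Set.mem_iUnion₂.2 ⟨(i, j), hne, hij⟩
  exact measure_mono_null hsub
    (measure_iUnion_null fun p => measure_iUnion_null fun hne => key p.1 p.2 hne)

/-! ### Symmetrization -/

lemma integral_eq_factorial_mul_chamber {N : ℕ} {F : (Fin N → ℝ) → ℝ}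
    (hF : Integrable F)
    (hsym : ∀ (σ : Equiv.Perm (Fin N)) (y : Fin N → ℝ), F (y ∘ σ) = F y) :
    ∫ y, F y = (N.factorial : ℝ) * ∫ y in weylChamber N, F y := by
  classical
  set A : Equiv.Perm (Fin N) → Set (Fin N → ℝ) := fun σ => {y | StrictMono (y ∘ σ)} with hA
  have hAm : ∀ σ, MeasurableSet (A σ) := by
    intro σ
    have hm : Measurable (fun y : Fin N → ℝ => y ∘ σ) :=
      measurable_pi_lambda _ fun j => measurable_pi_apply (σ j)
    exact hm (measurableSet_weylChamber N)
  have hT : ∀ σ : Equiv.Perm (Fin N), ∫ y in A σ, F y = ∫ y in weylChamber N, F y := by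
    intro σ
    have hmp := MeasureTheory.volume_measurePreserving_piCongrLeft (fun _ : Fin N => ℝ)
      ((σ⁻¹ : Equiv.Perm (Fin N)) : Fin N ≃ Fin N)
    set T := MeasurableEquiv.piCongrLeft (fun _ : Fin N => ℝ)
      ((σ⁻¹ : Equiv.Perm (Fin N)) : Fin N ≃ Fin N) with hTdef
    have hTy : ∀ y : Fin N → ℝ, T y = y ∘ σ := by
      intro y; funext j
      have h1 := Equiv.piCongrLeft_apply_apply (fun _ : Fin N => ℝ)
        ((σ⁻¹ : Equiv.Perm (Fin N)) : Fin N ≃ Fin N) y (σ j)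
      have h2 : (σ⁻¹ : Equiv.Perm (Fin N)) (σ j) = j := by simp
      rw [h2] at h1
      simpa [T, MeasurableEquiv.coe_piCongrLeft] using h1
    have hpre : T ⁻¹' (weylChamber N) = A σ := by
      ext y
      simp only [Set.mem_preimage, weylChamber, Set.mem_setOf_eq, hTy y, hA]
    have hint := hmp.setIntegral_preimage_emb (MeasurableEquiv.measurableEmbedding T) F
      (weylChamber N)
    rw [hpre] at hint
    have hFT : ∀ y, F (T y) = F y := fun y => by rw [hTy y, hsym]
    simp_rw [hFT] at hint
    exact hint
  have hdisj : Pairwise (Function.onFun Disjoint A) := by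
    intro σ τ hne
    simp only [Function.onFun, Set.disjoint_left]
    intro y hyσ hyτ
    have hyσ' : StrictMono (y ∘ σ) := hyσ
    have hyτ' : StrictMono (y ∘ τ) := hyτ
    have hinj : Function.Injective y := by
      have h1 : Function.Injective ((y ∘ σ) ∘ ⇑σ.symm) := hyσ'.injective.comp σ.symm.injective
      have h2 : (y ∘ ⇑σ) ∘ ⇑σ.symm = y := by funext i; simp
      rwa [h2] at h1
    have heq : y ∘ σ = y ∘ τ := Tuple.unique_monotone hyσ'.monotone hyτ'.monotone
    exact hne (Equiv.ext fun i => hinj (congrFun heq i))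
  have hcov : ∀ᵐ y : Fin N → ℝ, y ∈ ⋃ σ, A σ := by
    rw [ae_iff]
    apply measure_mono_null _ (null_noninj N)
    intro y hy
    simp only [Set.mem_setOf_eq, Set.mem_iUnion, not_exists] at hy ⊢
    intro hinj
    exact hy (Tuple.sort y)
      ((Tuple.monotone_sort y).strictMono_of_injective (hinj.comp (Tuple.sort y).injective))
  have hrestrict : volume.restrict (⋃ σ, A σ) = volume :=
    Measure.restrict_eq_self_of_ae_mem hcov
  calc ∫ y, F y = ∫ y in ⋃ σ, A σ, F y := by rw [hrestrict]
    _ = ∑' σ, ∫ y in A σ, F y := integral_iUnion hAm hdisj hF.integrableOn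
    _ = ∑ σ : Equiv.Perm (Fin N), ∫ y in A σ, F y := tsum_fintype _
    _ = ∑ _σ : Equiv.Perm (Fin N), ∫ y in weylChamber N, F y := by simp_rw [hT]
    _ = (N.factorial : ℝ) * ∫ y in weylChamber N, F y := by
        rw [Finset.sum_const, Finset.card_univ, Fintype.card_perm, Fintype.card_fin,
          nsmul_eq_mul]

/-! ### Chapman–Kolmogorov for the Karlin–McGregor determinants -/

lemma km_chapman {N : ℕ} {a b : ℝ} (ha : 0 < a) (hb : 0 < b) (x z : Fin N → ℝ) :
    ∫ y in weylChamber N, fKM N a x y * fKM N b y z = fKM N (a + b) x z := by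
  classical
  set F : (Fin N → ℝ) → ℝ := fun y => fKM N a x y * fKM N b y z with hF
  have hexp : ∀ y, F y
      = ∑ σ : Equiv.Perm (Fin N), ∑ τ : Equiv.Perm (Fin N),
          (((Equiv.Perm.sign σ : ℤ) : ℝ) * ((Equiv.Perm.sign τ : ℤ) : ℝ)) *
            ∏ i, (heatKernel a (x (σ i)) (y i) * heatKernel b (y i) (z (τ i))) :=
    fun y => fKM_expand a b x z y
  have hterm : ∀ (σ τ : Equiv.Perm (Fin N)), Integrable (fun y : Fin N → ℝ =>
      (((Equiv.Perm.sign σ : ℤ) : ℝ) * ((Equiv.Perm.sign τ : ℤ) : ℝ)) *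
        ∏ i, (heatKernel a (x (σ i)) (y i) * heatKernel b (y i) (z (τ i)))) := by
    intro σ τ
    exact (Integrable.fintype_prod
      (fun i => integrable_hk_mul ha hb (x (σ i)) (z (τ i)))).const_mul _
  have hint : Integrable F := by
    rw [show F = fun y => ∑ σ : Equiv.Perm (Fin N), ∑ τ : Equiv.Perm (Fin N),
        (((Equiv.Perm.sign σ : ℤ) : ℝ) * ((Equiv.Perm.sign τ : ℤ) : ℝ)) *
          ∏ i, (heatKernel a (x (σ i)) (y i) * heatKernel b (y i) (z (τ i))) from funext hexp]
    exact integrable_finset_sum _ fun σ _ => integrable_finset_sum _ fun τ _ => hterm σ τ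
  have hsym : ∀ (σ' : Equiv.Perm (Fin N)) (y : Fin N → ℝ), F (y ∘ σ') = F y := by
    intro σ' y
    simp only [hF]
    rw [fKM_perm_left, fKM_perm_right]
    rcases Int.units_eq_one_or (Equiv.Perm.sign σ') with h | h <;> rw [h] <;> push_cast <;> ring
  have h1 : ∫ y, F y = (N.factorial : ℝ) * ∫ y in weylChamber N, F y :=
    integral_eq_factorial_mul_chamber hint hsym
  have h2 : ∫ y, F y = (N.factorial : ℝ) * fKM N (a + b) x z := by
    calc ∫ y, F y
        = ∑ σ : Equiv.Perm (Fin N), ∑ τ : Equiv.Perm (Fin N),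
            ∫ y : Fin N → ℝ, (((Equiv.Perm.sign σ : ℤ) : ℝ) * ((Equiv.Perm.sign τ : ℤ) : ℝ)) *
              ∏ i, (heatKernel a (x (σ i)) (y i) * heatKernel b (y i) (z (τ i))) := by
          simp_rw [hexp]
          rw [integral_finset_sum _ fun σ _ =>
            integrable_finset_sum _ fun τ _ => hterm σ τ]
          exact Finset.sum_congr rfl fun σ _ => integral_finset_sum _ fun τ _ => hterm σ τ
      _ = ∑ σ : Equiv.Perm (Fin N), ∑ τ : Equiv.Perm (Fin N),
            ((Equiv.Perm.sign σ : ℤ) : ℝ) * ((Equiv.Perm.sign τ : ℤ) : ℝ) *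
              ∏ i, heatKernel (a + b) (x (σ i)) (z (τ i)) := by
          refine Finset.sum_congr rfl fun σ _ => Finset.sum_congr rfl fun τ _ => ?_
          rw [integral_const_mul, MeasureTheory.integral_fintype_prod_volume_eq_prod
            (fun i u => heatKernel a (x (σ i)) u * heatKernel b u (z (τ i)))]
          congr 1
          exact Finset.prod_congr rfl fun i _ => hk_conv ha hb _ _
      _ = (N.factorial : ℝ) * fKM N (a + b) x z := by
          have := sum_sum_perm (Matrix.of fun i j => heatKernel (a+b) (x i) (z j))
          simpa [Matrix.of_apply, fKM] using this
  have hfac : (N.factorial : ℝ) ≠ 0 := Nat.cast_ne_zero.2 (Nat.factorial_ne_zero N)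
  exact mul_left_cancel₀ hfac (h1.symm.trans h2)


/-! ### Integrability on the product space -/

lemma integrable_perm_prod {N : ℕ} {t : ℝ} (ht : 0 < t) (w : Fin N → ℝ)
    (τ : Equiv.Perm (Fin N)) :
    Integrable (fun z : Fin N → ℝ => ∏ i, heatKernel t (w i) (z (τ i))) := by
  have h : ∀ z : Fin N → ℝ, ∏ i, heatKernel t (w i) (z (τ i))
      = ∏ j, heatKernel t (w (τ.symm j)) (z j) := by
    intro z
    rw [← Equiv.prod_comp τ (fun j => heatKernel t (w (τ.symm j)) (z j))]
    simp
  simp_rw [h]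
  exact Integrable.fintype_prod fun j => integrable_hk ht _

lemma integral_perm_prod {N : ℕ} {t : ℝ} (ht : 0 < t) (w : Fin N → ℝ)
    (τ : Equiv.Perm (Fin N)) :
    ∫ z : Fin N → ℝ, ∏ i, heatKernel t (w i) (z (τ i)) = 1 := by
  have h : ∀ z : Fin N → ℝ, ∏ i, heatKernel t (w i) (z (τ i))
      = ∏ j, heatKernel t (w (τ.symm j)) (z j) := by
    intro z
    rw [← Equiv.prod_comp τ (fun j => heatKernel t (w (τ.symm j)) (z j))]
    simp
  simp_rw [h]
  rw [MeasureTheory.integral_fintype_prod_volume_eq_prod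
    (fun j u => heatKernel t (w (τ.symm j)) u)]
  simp [integral_hk ht]

lemma integrable_uncurry_term {N : ℕ} {a b : ℝ} (ha : 0 < a) (hb : 0 < b)
    (x : Fin N → ℝ) (σ τ : Equiv.Perm (Fin N)) :
    Integrable (fun p : (Fin N → ℝ) × (Fin N → ℝ) =>
        ∏ i, (heatKernel a (x (σ i)) (p.1 i) * heatKernel b (p.1 i) (p.2 (τ i))))
      (volume.prod volume) := by
  have hcont : Continuous (fun p : (Fin N → ℝ) × (Fin N → ℝ) =>
      ∏ i, (heatKernel a (x (σ i)) (p.1 i) * heatKernel b (p.1 i) (p.2 (τ i)))) := by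
    apply continuous_finset_prod
    intro i _
    exact (hk_continuous2 a continuous_const ((continuous_apply i).comp continuous_fst)).mul
      (hk_continuous2 b ((continuous_apply i).comp continuous_fst)
        ((continuous_apply (τ i)).comp continuous_snd))
  rw [MeasureTheory.integrable_prod_iff hcont.aestronglyMeasurable]
  constructor
  · refine Filter.Eventually.of_forall fun y => ?_
    simp_rw [Finset.prod_mul_distrib]
    exact (integrable_perm_prod hb y τ).const_mul _
  · have heq : (fun y : Fin N → ℝ => ∫ zz : Fin N → ℝ,
        ‖∏ i, (heatKernel a (x (σ i)) (y i) * heatKernel b (y i) (zz (τ i)))‖)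
        = fun y => ∏ i, heatKernel a (x (σ i)) (y i) := by
      funext y
      have hnn : ∀ zz : Fin N → ℝ,
          0 ≤ ∏ i, (heatKernel a (x (σ i)) (y i) * heatKernel b (y i) (zz (τ i))) :=
        fun zz => Finset.prod_nonneg fun i _ => mul_nonneg (hk_nonneg _ _ _) (hk_nonneg _ _ _)
      calc ∫ zz : Fin N → ℝ,
            ‖∏ i, (heatKernel a (x (σ i)) (y i) * heatKernel b (y i) (zz (τ i)))‖
          = ∫ zz : Fin N → ℝ, (∏ i, heatKernel a (x (σ i)) (y i)) *
              ∏ i, heatKernel b (y i) (zz (τ i)) := by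
            refine integral_congr_ae (Filter.Eventually.of_forall fun zz => ?_)
            simp only []
            rw [Real.norm_eq_abs, abs_of_nonneg (hnn zz), Finset.prod_mul_distrib]
        _ = (∏ i, heatKernel a (x (σ i)) (y i)) *
              ∫ zz : Fin N → ℝ, ∏ i, heatKernel b (y i) (zz (τ i)) :=
            integral_const_mul _ _
        _ = ∏ i, heatKernel a (x (σ i)) (y i) := by
            rw [integral_perm_prod hb y τ, mul_one]
    rw [heq]
    exact Integrable.fintype_prod fun i => integrable_hk ha _

end KMAux

/-- Semigroup property for the non-colliding probability:
`∫_{ℝ^N_<} f_N(a; x, y) 𝒩_N(b; y) dy = 𝒩_N(a+b; x)`. -/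
theorem karlinMcGregor_nonColliding_semigroup (N : ℕ) (a b : ℝ) (ha : 0 < a) (hb : 0 < b)
    (x : Fin N → ℝ) :
    ∫ y in weylChamber N, fKM N a x y * NKM N b y = NKM N (a + b) x := by
  classical
  have hH : Integrable (Function.uncurry fun y zz : Fin N → ℝ => fKM N a x y * fKM N b y zz)
      ((volume.restrict (weylChamber N)).prod (volume.restrict (weylChamber N))) := by
    rw [Measure.prod_restrict]
    apply Integrable.restrict (μ := volume.prod volume)
    have hfun : (Function.uncurry fun y zz : Fin N → ℝ => fKM N a x y * fKM N b y zz)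
        = fun p : (Fin N → ℝ) × (Fin N → ℝ) =>
            ∑ σ : Equiv.Perm (Fin N), ∑ τ : Equiv.Perm (Fin N),
              (((Equiv.Perm.sign σ : ℤ) : ℝ) * ((Equiv.Perm.sign τ : ℤ) : ℝ)) *
                ∏ i, (heatKernel a (x (σ i)) (p.1 i) * heatKernel b (p.1 i) (p.2 (τ i))) := by
      funext p
      exact KMAux.fKM_expand a b x p.2 p.1
    rw [hfun]
    exact integrable_finset_sum _ fun σ _ => integrable_finset_sum _ fun τ _ =>
      (KMAux.integrable_uncurry_term ha hb x σ τ).const_mul _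
  calc ∫ y in weylChamber N, fKM N a x y * NKM N b y
      = ∫ y in weylChamber N, ∫ zz in weylChamber N, fKM N a x y * fKM N b y zz := by
        simp only [NKM]
        refine integral_congr_ae (Filter.Eventually.of_forall fun y => ?_)
        exact (integral_const_mul _ _).symm
    _ = ∫ zz in weylChamber N, ∫ y in weylChamber N, fKM N a x y * fKM N b y zz :=
        integral_integral_swap hH
    _ = ∫ zz in weylChamber N, fKM N (a + b) x zz := by
        refine integral_congr_ae (Filter.Eventually.of_forall fun zz => ?_)
        exact KMAux.km_chapman ha hb x zz
    _ = NKM N (a + b) x := rfl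
end

section
/- For every N ∈ ℕ, every t > 0 and all x, y ∈ ℝ^N_<, the Karlin–McGregor determinant is strictly positive: f_N(t; x, y) = det_{1≤i,j≤N}[p_t(x_i, y_j)] > 0. In particular 𝒩_N(t; x) > 0 for all t > 0 and x ∈ ℝ^N_<. -/
open MeasureTheory Set

section Aux

/-- Exponential functions with distinct exponents form a Chebyshev system:
a combination vanishing at `N` increasing points has all coefficients zero. -/
private lemma KM_cheb_zero : ∀ (N : ℕ) (a : Fin N → ℝ), StrictMono a → ∀ (c : Fin N → ℝ)
    (b : Fin N → ℝ), StrictMono b →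
    (∀ j, ∑ i, c i * Real.exp (a i * b j) = 0) → c = 0 := by
  intro N
  induction N with
  | zero => intro a _ c b _ _; ext i; exact absurd i.2 (by omega)
  | succ n ih =>
    intro a ha c b hb hzero
    set g : ℝ → ℝ := fun s => ∑ i, c i * Real.exp ((a i - a 0) * s) with hg
    set g' : ℝ → ℝ := fun s => ∑ i, c i * ((a i - a 0) * Real.exp ((a i - a 0) * s)) with hg'
    have hder : ∀ s : ℝ, HasDerivAt g (g' s) s := by
      intro s
      apply HasDerivAt.fun_sum
      intro i _
      have h1 : HasDerivAt (fun s : ℝ => (a i - a 0) * s) (a i - a 0) s := by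
        simpa using (hasDerivAt_id s).const_mul (a i - a 0)
      have h2 := (Real.hasDerivAt_exp ((a i - a 0) * s)).comp s h1
      have := h2.const_mul (c i)
      exact this.congr_deriv (by ring)
    have hgz : ∀ j, g (b j) = 0 := by
      intro j
      have : g (b j) = Real.exp (-(a 0) * b j) * ∑ i, c i * Real.exp (a i * b j) := by
        rw [Finset.mul_sum]
        apply Finset.sum_congr rfl
        intro i _
        rw [show (a i - a 0) * b j = -a 0 * b j + a i * b j by ring, Real.exp_add]
        ring
      rw [this, hzero j, mul_zero]
    have hroll : ∀ j : Fin n, ∃ ξ ∈ Ioo (b j.castSucc) (b j.succ), g' ξ = 0 := by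
      intro j
      apply exists_hasDerivAt_eq_zero (hb (Fin.castSucc_lt_succ : j.castSucc < j.succ))
      · exact fun s _ => (hder s).continuousAt.continuousWithinAt
      · rw [hgz, hgz]
      · exact fun s _ => hder s
    choose ξ hξmem hξzero using hroll
    have hξmono : StrictMono ξ := by
      intro j k hjk
      calc ξ j < b j.succ := (hξmem j).2
        _ ≤ b k.castSucc := hb.monotone (Fin.succ_le_castSucc_iff.mpr hjk)
        _ < ξ k := (hξmem k).1
    have hIH := ih (fun i => a i.succ - a 0)
      (fun i j hij => by simpa using ha (Fin.succ_lt_succ_iff.mpr hij))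
      (fun i => c i.succ * (a i.succ - a 0)) ξ hξmono ?_
    · have hcs : ∀ i : Fin n, c i.succ = 0 := by
        intro i
        have h0 := congrFun hIH i
        have hpos : 0 < a i.succ - a 0 := sub_pos.mpr (ha (Fin.succ_pos i))
        simpa [hpos.ne'] using h0
      have hc0 : c 0 = 0 := by
        have := hzero 0
        rw [Fin.sum_univ_succ] at this
        simp only [hcs, zero_mul, Finset.sum_const_zero, add_zero] at this
        exact (mul_eq_zero.mp this).resolve_right (Real.exp_ne_zero _)
      ext i
      refine Fin.cases ?_ ?_ i
      · exact hc0
      · exact hcs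
    · intro j
      have h := hξzero j
      simp only [hg'] at h
      rw [Fin.sum_univ_succ] at h
      simp only [sub_self, zero_mul, mul_zero, zero_add] at h
      show ∑ i : Fin n, (c i.succ * (a i.succ - a 0)) * Real.exp ((a i.succ - a 0) * ξ j) = 0
      rw [← h]
      exact Finset.sum_congr rfl fun i _ => by ring

private lemma KM_expDet_ne_zero {N : ℕ} {a b : Fin N → ℝ} (ha : StrictMono a)
    (hb : StrictMono b) :
    Matrix.det (Matrix.of fun i j => Real.exp (a i * b j)) ≠ 0 := by
  intro h
  obtain ⟨v, hv, hvz⟩ := (Matrix.exists_vecMul_eq_zero_iff).mpr h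
  apply hv
  apply KM_cheb_zero N a ha v b hb
  intro j
  have := congrFun hvz j
  simpa [Matrix.vecMul, dotProduct] using this

private lemma KM_weylChamber_convex (N : ℕ) : Convex ℝ {b : Fin N → ℝ | StrictMono b} := by
  intro b hb b' hb' s t hs ht hst
  intro i j hij
  simp only [Pi.add_apply, Pi.smul_apply, smul_eq_mul]
  rcases hs.eq_or_lt with h | h
  · have htt : t = 1 := by linarith
    simp [← h, htt, hb' hij]
  · have h1 := mul_lt_mul_of_pos_left (hb hij) h
    have h2 := mul_le_mul_of_nonneg_left (hb' hij).le ht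
    linarith

private lemma KM_expDet_pos {N : ℕ} {a b : Fin N → ℝ} (ha : StrictMono a) (hb : StrictMono b) :
    0 < Matrix.det (Matrix.of fun i j => Real.exp (a i * b j)) := by
  set F : (Fin N → ℝ) → ℝ := fun b => Matrix.det (Matrix.of fun i j => Real.exp (a i * b j))
    with hF
  have hcont : Continuous F := by
    apply Continuous.matrix_det
    exact continuous_matrix fun i j =>
      (Real.continuous_exp.comp (continuous_const.mul (continuous_apply j)))
  set S : Set (Fin N → ℝ) := {b | StrictMono b} with hS
  have hb0 : (fun j : Fin N => ((j : ℕ) : ℝ)) ∈ S := by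
    intro i j hij
    show ((i : ℕ) : ℝ) < ((j : ℕ) : ℝ)
    exact_mod_cast hij
  have hFb0 : 0 < F (fun j : Fin N => ((j : ℕ) : ℝ)) := by
    have hmat : (Matrix.of fun i j : Fin N => Real.exp (a i * ((j : ℕ) : ℝ)))
        = Matrix.vandermonde fun i => Real.exp (a i) := by
      ext i j
      rw [Matrix.of_apply, mul_comm, Real.exp_nat_mul]; rfl
    show 0 < Matrix.det (Matrix.of fun i j : Fin N => Real.exp (a i * ((j : ℕ) : ℝ)))
    rw [hmat, Matrix.det_vandermonde]
    apply Finset.prod_pos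
    intro i _
    apply Finset.prod_pos
    intro j hj
    exact sub_pos.mpr (Real.exp_lt_exp.mpr (ha (Finset.mem_Ioi.mp hj)))
  by_contra hle
  push_neg at hle
  have hne : F b ≠ 0 := KM_expDet_ne_zero ha hb
  have hlt : F b < 0 := lt_of_le_of_ne hle hne
  have hpre : IsPreconnected (F '' S) :=
    ((KM_weylChamber_convex N).isPreconnected).image F hcont.continuousOn
  have hoc : OrdConnected (F '' S) := hpre.ordConnected
  have h0 : (0 : ℝ) ∈ F '' S := by
    apply hoc.out (mem_image_of_mem F hb) (mem_image_of_mem F hb0)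
    exact ⟨hlt.le, hFb0.le⟩
  obtain ⟨b'', hb'', hFb''⟩ := h0
  exact KM_expDet_ne_zero ha hb'' hFb''

end Aux

private lemma KM_fKM_pos (N : ℕ) (t : ℝ) (ht : 0 < t) (x : Fin N → ℝ)
    (hx : x ∈ weylChamber N) (y : Fin N → ℝ) (hy : y ∈ weylChamber N) : 0 < fKM N t x y := by
  have hsp : 0 < Real.sqrt (2 * Real.pi * t) :=
    Real.sqrt_pos.mpr (by positivity)
  set a : Fin N → ℝ := fun i => x i / t with hadef
  have ha : StrictMono a := fun i j hij => by
    show x i / t < x j / t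
    gcongr
    exact hx hij
  set g : Fin N → ℝ := fun i => (1 / Real.sqrt (2 * Real.pi * t)) *
    Real.exp (-(x i)^2 / (2 * t)) with hgdef
  set h : Fin N → ℝ := fun j => Real.exp (-(y j)^2 / (2 * t)) with hhdef
  set E : Matrix (Fin N) (Fin N) ℝ := Matrix.of fun i j => Real.exp (a i * y j) with hEdef
  have hfac : (Matrix.of fun i j => heatKernel t (x i) (y j))
      = Matrix.of fun i j => g i * ((Matrix.of fun i j => h j * E i j) i j) := by
    ext i j
    show heatKernel t (x i) (y j) = g i * (h j * Real.exp (a i * y j))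
    have hexp : Real.exp (-(x i - y j)^2 / (2 * t))
        = Real.exp (-(x i)^2 / (2 * t)) *
          (Real.exp (-(y j)^2 / (2 * t)) * Real.exp ((x i / t) * y j)) := by
      rw [← Real.exp_add, ← Real.exp_add]
      congr 1
      field_simp
      ring
    rw [heatKernel, hexp, hgdef, hhdef, hadef]
    ring
  have hkey : fKM N t x y = (∏ i, g i) *
      ((∏ j, h j) * Matrix.det E) := by
    rw [fKM, hfac, Matrix.det_mul_column, Matrix.det_mul_row]
  rw [hkey]
  have hg : 0 < ∏ i, g i :=
    Finset.prod_pos fun i _ => mul_pos (by positivity) (Real.exp_pos _)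
  have hh : 0 < ∏ j, h j := Finset.prod_pos fun j _ => Real.exp_pos _
  exact mul_pos hg (mul_pos hh (KM_expDet_pos ha hy))

private lemma KM_weylChamber_isOpen (N : ℕ) : IsOpen (weylChamber N) := by
  have : weylChamber N
      = ⋂ (p : {p : Fin N × Fin N // p.1 < p.2}), {y : Fin N → ℝ | y p.1.1 < y p.1.2} := by
    ext z
    simp only [weylChamber, mem_iInter, mem_setOf_eq, Subtype.forall, Prod.forall]
    exact ⟨fun hz i j hij => hz hij, fun hz i j hij => hz i j hij⟩
  rw [this]
  exact isOpen_iInter_of_finite fun p =>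
    isOpen_lt (continuous_apply _) (continuous_apply _)

private lemma KM_integrable (N : ℕ) (t : ℝ) (ht : 0 < t) (x : Fin N → ℝ) :
    Integrable (fun y : Fin N → ℝ => fKM N t x y) := by
  have h1d : ∀ c : ℝ, Integrable (fun z : ℝ => heatKernel t c z) := by
    intro c
    have h0 : Integrable (fun z : ℝ => Real.exp (-(1/(2*t)) * z^2)) :=
      integrable_exp_neg_mul_sq (by positivity)
    have h1 := h0.comp_sub_right c
    have h2 := h1.const_mul (1 / Real.sqrt (2 * Real.pi * t))
    refine h2.congr (Filter.Eventually.of_forall fun z => ?_)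
    show (1 / Real.sqrt (2 * Real.pi * t)) * Real.exp (-(1/(2*t)) * (z - c)^2)
        = heatKernel t c z
    rw [heatKernel]
    congr 1
    congr 1
    ring
  have hrw : (fun y : Fin N → ℝ => fKM N t x y)
      = fun y => ∑ σ : Equiv.Perm (Fin N),
          (((Equiv.Perm.sign σ : ℤ) : ℝ)) * ∏ i, heatKernel t (x (σ i)) (y i) := by
    funext y
    rw [fKM, Matrix.det_apply]
    apply Finset.sum_congr rfl
    intro σ _
    rw [Units.smul_def, zsmul_eq_mul]
    rfl
  rw [hrw]
  apply integrable_finset_sum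
  intro σ _
  exact (Integrable.fintype_prod (f := fun i z => heatKernel t (x (σ i)) z)
    fun i => h1d _).const_mul _

/-- Strict positivity of the Karlin–McGregor determinant on the Weyl chamber, and,
in particular, of the non-colliding probability `𝒩_N`. -/
theorem karlinMcGregor_pos (N : ℕ) (t : ℝ) (ht : 0 < t)
    (x : Fin N → ℝ) (hx : x ∈ weylChamber N) :
    (∀ y : Fin N → ℝ, y ∈ weylChamber N → 0 < fKM N t x y) ∧ 0 < NKM N t x := by
  refine ⟨fun y hy => KM_fKM_pos N t ht x hx y hy, ?_⟩
  have hopen := KM_weylChamber_isOpen N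
  have hmeas := hopen.measurableSet
  have hne : (weylChamber N).Nonempty := by
    refine ⟨fun j => ((j : ℕ) : ℝ), fun i j hij => ?_⟩
    show ((i : ℕ) : ℝ) < ((j : ℕ) : ℝ)
    exact_mod_cast hij
  have hvol : 0 < volume (weylChamber N) := hopen.measure_pos volume hne
  have hae : 0 ≤ᵐ[volume.restrict (weylChamber N)] fun y => fKM N t x y := by
    filter_upwards [ae_restrict_mem hmeas] with y hy
    exact (KM_fKM_pos N t ht x hx y hy).le
  rw [NKM, setIntegral_pos_iff_support_of_nonneg_ae hae (KM_integrable N t ht x).integrableOn]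
  refine lt_of_lt_of_le hvol (measure_mono ?_)
  intro y hy
  exact ⟨(KM_fKM_pos N t ht x hx y hy).ne', hy⟩
end

section
/- For every N ∈ ℕ and every fixed x ∈ ℝ^N_<, the non-colliding probability tends to one in the short-time limit: lim_{t → 0+} 𝒩_N(t; x) = 1. -/
open MeasureTheory

lemma heatKernel_nonneg (t x y : ℝ) : 0 ≤ heatKernel t x y := by
  unfold heatKernel; positivity

lemma heatKernel_integrable {t : ℝ} (ht : 0 < t) (c : ℝ) :
    Integrable (fun y => heatKernel t c y) := by
  unfold heatKernel
  apply Integrable.const_mul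
  have h : ∀ y : ℝ, -(c - y)^2 / (2*t) = -((2*t)⁻¹) * (y - c)^2 := by
    intro y; rw [neg_mul, neg_div, div_eq_inv_mul]; ring_nf
  simp_rw [h]
  have := (integrable_exp_neg_mul_sq (show 0 < (2*t)⁻¹ by positivity)).comp_sub_right (c)
  simpa using this

lemma heatKernel_integral {t : ℝ} (ht : 0 < t) (c : ℝ) :
    ∫ y : ℝ, heatKernel t c y = 1 := by
  unfold heatKernel
  rw [MeasureTheory.integral_const_mul]
  have h : ∀ y : ℝ, -(c - y)^2 / (2*t) = -((2*t)⁻¹) * (y - c)^2 := by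
    intro y; rw [neg_mul, neg_div, div_eq_inv_mul]; ring_nf
  simp_rw [h]
  rw [integral_sub_right_eq_self (fun y => Real.exp (-((2*t)⁻¹) * y^2)) c]
  rw [integral_gaussian]
  have h2 : Real.pi / (2*t)⁻¹ = 2 * Real.pi * t := by
    field_simp
  rw [h2, one_div, inv_mul_cancel₀]
  positivity

lemma pair_bound {t a b u v : ℝ} (ht : 0 < t) (hab : b < a) (huv : u ≤ v) :
    heatKernel t a u * heatKernel t b v ≤
      2 * Real.exp (-(a-b)^2/(8*t)) * (heatKernel (2*t) a u * heatKernel (2*t) b v) := by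
  unfold heatKernel
  have hpi := Real.pi_pos
  have hc1 : (1 / Real.sqrt (2*Real.pi*t)) * (1 / Real.sqrt (2*Real.pi*t)) = 1/(2*Real.pi*t) := by
    rw [div_mul_div_comm, one_mul, Real.mul_self_sqrt (by positivity)]
  have hc2 : (2:ℝ) * ((1 / Real.sqrt (2*Real.pi*(2*t))) * (1 / Real.sqrt (2*Real.pi*(2*t)))) = 1/(2*Real.pi*t) := by
    rw [div_mul_div_comm, one_mul, Real.mul_self_sqrt (by positivity)]
    rw [mul_one_div, div_eq_div_iff (by positivity) (by positivity)]
    ring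
  calc (1 / Real.sqrt (2*Real.pi*t)) * Real.exp (-(a-u)^2/(2*t)) *
        ((1 / Real.sqrt (2*Real.pi*t)) * Real.exp (-(b-v)^2/(2*t)))
      = (1/(2*Real.pi*t)) * Real.exp (-(a-u)^2/(2*t) + -(b-v)^2/(2*t)) := by
        rw [Real.exp_add, ← hc1]; ring
    _ ≤ (1/(2*Real.pi*t)) * Real.exp (-(a-b)^2/(8*t) + (-(a-u)^2/(2*(2*t)) + -(b-v)^2/(2*(2*t)))) := by
        apply mul_le_mul_of_nonneg_left _ (by positivity)
        rw [Real.exp_le_exp]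
        rw [← add_div, ← add_div]
        rw [div_add_div _ _ (by positivity : (8*t:ℝ) ≠ 0) (by positivity : (2*(2*t):ℝ) ≠ 0)]
        rw [div_le_div_iff₀ (by positivity) (by positivity)]
        have key : (a-b)^2 ≤ 2*((a-u)^2+(b-v)^2) := by
          nlinarith [sq_nonneg ((a-u)+(b-v)), sq_nonneg (v-u),
            mul_nonneg (sub_nonneg.2 huv) (le_of_lt (sub_pos.2 hab))]
        nlinarith [mul_le_mul_of_nonneg_right key (le_of_lt (mul_pos ht ht)), sq_nonneg t]
    _ = 2 * Real.exp (-(a-b)^2/(8*t)) *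
        ((1 / Real.sqrt (2*Real.pi*(2*t))) * Real.exp (-(a-u)^2/(2*(2*t))) *
         ((1 / Real.sqrt (2*Real.pi*(2*t))) * Real.exp (-(b-v)^2/(2*(2*t))))) := by
        rw [Real.exp_add, Real.exp_add, ← hc2]; ring

lemma prod_heatKernel_integrable {N : ℕ} {t : ℝ} (ht : 0 < t) (c : Fin N → ℝ) :
    Integrable (fun y : Fin N → ℝ => ∏ i, heatKernel t (c i) (y i)) :=
  Integrable.fintype_prod (fun i => heatKernel_integrable ht (c i))

lemma prod_heatKernel_integral {N : ℕ} {t : ℝ} (ht : 0 < t) (c : Fin N → ℝ) :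
    ∫ y : Fin N → ℝ, ∏ i, heatKernel t (c i) (y i) = 1 := by
  rw [integral_fintype_prod_volume_eq_prod (f := fun i y => heatKernel t (c i) y)]
  simp [heatKernel_integral ht]

lemma region_bound {N : ℕ} {t : ℝ} (ht : 0 < t) (c : Fin N → ℝ) {j₁ j₂ : Fin N}
    (hne : j₁ ≠ j₂) (hc : c j₂ < c j₁) {S : Set (Fin N → ℝ)} (hSm : MeasurableSet S)
    (hS : S ⊆ {y | y j₁ ≤ y j₂}) :
    ∫ y in S, ∏ i, heatKernel t (c i) (y i) ≤ 2 * Real.exp (-(c j₁ - c j₂)^2/(8*t)) := by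
  classical
  set K := 2 * Real.exp (-(c j₁ - c j₂)^2/(8*t)) with hK
  have hKpos : 0 < K := by positivity
  set q : Fin N → ℝ → ℝ := fun i y =>
    if i = j₁ ∨ i = j₂ then heatKernel (2*t) (c i) y else heatKernel t (c i) y with hq
  have hqint : ∀ i, Integrable (q i) := by
    intro i; by_cases h : i = j₁ ∨ i = j₂ <;> simp only [hq, h, if_true, if_false] <;>
      [exact heatKernel_integrable (by positivity) _; exact heatKernel_integrable ht _]
  have hqnn : ∀ i y, 0 ≤ q i y := by
    intro i y; by_cases h : i = j₁ ∨ i = j₂ <;> simp only [hq, h, if_true, if_false] <;>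
      exact heatKernel_nonneg _ _ _
  have hqone : ∀ i, ∫ y : ℝ, q i y = 1 := by
    intro i; by_cases h : i = j₁ ∨ i = j₂ <;> simp only [hq, h, if_true, if_false] <;>
      [exact heatKernel_integral (by positivity) _; exact heatKernel_integral ht _]
  have hgint : Integrable (fun y : Fin N → ℝ => K * ∏ i, q i (y i)) :=
    (Integrable.fintype_prod hqint).const_mul K
  have hpt : ∀ y ∈ S, ∏ i, heatKernel t (c i) (y i) ≤ K * ∏ i, q i (y i) := by
    intro y hy
    have huv : y j₁ ≤ y j₂ := hS hy
    have hmem₂ : j₂ ∈ (Finset.univ.erase j₁) := Finset.mem_erase.2 ⟨hne.symm, Finset.mem_univ _⟩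
    have hsplit : ∀ g : Fin N → ℝ,
        ∏ i, g i = g j₁ * (g j₂ * ∏ i ∈ (Finset.univ.erase j₁).erase j₂, g i) := by
      intro g
      rw [Finset.mul_prod_erase _ _ hmem₂, Finset.mul_prod_erase _ _ (Finset.mem_univ j₁)]
    rw [hsplit (fun i => heatKernel t (c i) (y i)), hsplit (fun i => q i (y i))]
    have hrest : ∏ i ∈ (Finset.univ.erase j₁).erase j₂, heatKernel t (c i) (y i)
        = ∏ i ∈ (Finset.univ.erase j₁).erase j₂, q i (y i) := by
      apply Finset.prod_congr rfl
      intro i hi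
      have h1 : i ≠ j₂ := (Finset.mem_erase.1 hi).1
      have h2 : i ≠ j₁ := (Finset.mem_erase.1 (Finset.mem_erase.1 hi).2).1
      simp [hq, h1, h2]
    rw [hrest]
    have hqj₁ : q j₁ (y j₁) = heatKernel (2*t) (c j₁) (y j₁) := by simp [hq]
    have hqj₂ : q j₂ (y j₂) = heatKernel (2*t) (c j₂) (y j₂) := by simp [hq]
    have hpair := pair_bound ht hc huv
    have hrnn : 0 ≤ ∏ i ∈ (Finset.univ.erase j₁).erase j₂, q i (y i) :=
      Finset.prod_nonneg (fun i _ => hqnn i (y i))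
    calc heatKernel t (c j₁) (y j₁) * (heatKernel t (c j₂) (y j₂) *
          ∏ i ∈ (Finset.univ.erase j₁).erase j₂, q i (y i))
        = (heatKernel t (c j₁) (y j₁) * heatKernel t (c j₂) (y j₂)) *
          ∏ i ∈ (Finset.univ.erase j₁).erase j₂, q i (y i) := by ring
      _ ≤ (K * (heatKernel (2*t) (c j₁) (y j₁) * heatKernel (2*t) (c j₂) (y j₂))) *
          ∏ i ∈ (Finset.univ.erase j₁).erase j₂, q i (y i) :=
          mul_le_mul_of_nonneg_right hpair hrnn
      _ = K * (q j₁ (y j₁) * (q j₂ (y j₂) *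
          ∏ i ∈ (Finset.univ.erase j₁).erase j₂, q i (y i))) := by
          rw [hqj₁, hqj₂]; ring
  calc ∫ y in S, ∏ i, heatKernel t (c i) (y i)
      ≤ ∫ y in S, K * ∏ i, q i (y i) :=
        setIntegral_mono_on ((prod_heatKernel_integrable ht c).integrableOn)
          (hgint.integrableOn) hSm hpt
    _ ≤ ∫ y : Fin N → ℝ, K * ∏ i, q i (y i) := by
        apply setIntegral_le_integral hgint
        filter_upwards with y
        exact mul_nonneg hKpos.le (Finset.prod_nonneg fun i _ => hqnn i (y i))
    _ = K := by
        rw [MeasureTheory.integral_const_mul,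
          integral_fintype_prod_volume_eq_prod (f := fun i y => q i y)]
        simp [hqone]

lemma perm_exists_inversion {N : ℕ} {σ : Equiv.Perm (Fin N)} (hσ : σ ≠ 1) :
    ∃ i j : Fin N, i < j ∧ σ j < σ i := by
  haveI : WellFoundedLT (Fin N) := Finite.to_wellFoundedLT
  by_contra h
  push_neg at h
  have hmono : Monotone σ := by
    intro i j hij
    rcases eq_or_lt_of_le hij with rfl | hlt
    · exact le_refl _
    · exact h i j hlt
  have hsm : StrictMono ⇑σ := hmono.strictMono_of_injective σ.injective
  apply hσ
  ext i
  have h1 : i ≤ σ i := StrictMono.le_apply hsm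
  have hsm' : StrictMono ⇑σ.symm := by
    intro a b hab
    rcases lt_trichotomy (σ.symm a) (σ.symm b) with hlt | heq | hgt
    · exact hlt
    · exfalso
      have := congrArg σ heq
      simp only [Equiv.apply_symm_apply] at this
      exact absurd this (ne_of_lt hab)
    · exfalso
      have := hsm hgt
      simp only [Equiv.apply_symm_apply] at this
      exact absurd hab (not_lt.2 this.le)
  have h2 : σ i ≤ i := by
    have := StrictMono.le_apply hsm' (x := σ i)
    simpa using this
  exact le_antisymm h2 h1

lemma weylChamber_measurable (N : ℕ) : MeasurableSet (weylChamber N) := by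
  have : weylChamber N = ⋂ i, ⋂ j, ⋂ (_ : i < j), {y : Fin N → ℝ | y i < y j} := by
    ext y
    simp only [weylChamber, Set.mem_setOf_eq, Set.mem_iInter]
    exact ⟨fun h i j hij => h hij, fun h a b hab => h a b hab⟩
  rw [this]
  exact MeasurableSet.iInter fun i => MeasurableSet.iInter fun j =>
    MeasurableSet.iInter fun _ =>
      measurableSet_lt (measurable_pi_apply i) (measurable_pi_apply j)

lemma setIntegral_union_le {α : Type*} [MeasurableSpace α] {μ : Measure α} {f : α → ℝ}
    (hf : Integrable f μ) (hnn : ∀ x, 0 ≤ f x) {A B : Set α}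
    (hA : MeasurableSet A) (hB : MeasurableSet B) :
    ∫ x in A ∪ B, f x ∂μ ≤ (∫ x in A, f x ∂μ) + ∫ x in B, f x ∂μ := by
  have hAB : A ∪ B = A ∪ (B \ A) := by simp [Set.union_diff_self]
  rw [hAB, setIntegral_union disjoint_sdiff_self_right (hB.diff hA)
    hf.integrableOn hf.integrableOn]
  gcongr
  · filter_upwards with y using hnn y
  · exact hf.integrableOn
  · exact Set.diff_subset

lemma setIntegral_biUnion_le {α ι : Type*} [MeasurableSpace α] {μ : Measure α} {f : α → ℝ}
    (hf : Integrable f μ) (hnn : ∀ x, 0 ≤ f x) (S : ι → Set α)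
    (hSm : ∀ p, MeasurableSet (S p)) (P : Finset ι) :
    ∫ x in ⋃ p ∈ P, S p, f x ∂μ ≤ ∑ p ∈ P, ∫ x in S p, f x ∂μ := by
  classical
  induction P using Finset.induction_on with
  | empty => simp
  | insert _ _ hnotmem ih =>
      rename_i a P'
      rw [Finset.set_biUnion_insert, Finset.sum_insert hnotmem]
      calc ∫ x in S a ∪ ⋃ p ∈ P', S p, f x ∂μ
          ≤ (∫ x in S a, f x ∂μ) + ∫ x in ⋃ p ∈ P', S p, f x ∂μ :=
            setIntegral_union_le hf hnn (hSm a)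
              (MeasurableSet.biUnion P'.countable_toSet (fun p _ => hSm p))
        _ ≤ (∫ x in S a, f x ∂μ) + ∑ p ∈ P', ∫ x in S p, f x ∂μ := by gcongr

/-- Short-time limit: for fixed `x` in the Weyl chamber, `𝒩_N(t; x) → 1` as `t → 0+`. -/
theorem nonColliding_tendsto_one (N : ℕ) (x : Fin N → ℝ) (hx : x ∈ weylChamber N) :
    Filter.Tendsto (fun t => NKM N t x) (nhdsWithin 0 (Set.Ioi 0)) (nhds 1) := by
  classical
  have hW : MeasurableSet (weylChamber N) := weylChamber_measurable N
  set P : Finset (Fin N × Fin N) := Finset.univ.filter (fun p => p.1 < p.2) with hP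
  set E : ℝ → ℝ := fun t => ∑ p ∈ P, 2 * Real.exp (-(x p.2 - x p.1)^2/(8*t)) with hE
  set C : ℝ := (Fintype.card (Equiv.Perm (Fin N)) : ℝ) with hC
  -- E tends to 0
  have hE0 : Filter.Tendsto E (nhdsWithin 0 (Set.Ioi 0)) (nhds 0) := by
    have : Filter.Tendsto (fun t : ℝ => (0:ℝ)) (nhdsWithin 0 (Set.Ioi 0)) (nhds 0) :=
      tendsto_const_nhds
    have hterm : ∀ p ∈ P, Filter.Tendsto
        (fun t : ℝ => 2 * Real.exp (-(x p.2 - x p.1)^2/(8*t)))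
        (nhdsWithin 0 (Set.Ioi 0)) (nhds 0) := by
      intro p hp
      have hplt : p.1 < p.2 := by
        simpa [hP] using (Finset.mem_filter.1 hp).2
      have hcpos : 0 < (x p.2 - x p.1)^2 := by
        have h : x p.1 < x p.2 := hx hplt
        have h2 : (0:ℝ) < x p.2 - x p.1 := sub_pos.2 h
        exact pow_pos h2 2
      set c : ℝ := (x p.2 - x p.1)^2 with hc
      have h1 : Filter.Tendsto (fun t : ℝ => (c/8) * t⁻¹)
          (nhdsWithin 0 (Set.Ioi 0)) Filter.atTop :=
        Filter.Tendsto.const_mul_atTop (by positivity) tendsto_inv_nhdsGT_zero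
      have h2 : Filter.Tendsto (fun t : ℝ => -(c/(8*t)))
          (nhdsWithin 0 (Set.Ioi 0)) Filter.atBot := by
        have := Filter.tendsto_neg_atTop_atBot.comp h1
        apply this.congr
        intro t
        simp only [Function.comp]
        ring_nf
      have h3 : Filter.Tendsto (fun t : ℝ => Real.exp (-c/(8*t)))
          (nhdsWithin 0 (Set.Ioi 0)) (nhds 0) := by
        have := Real.tendsto_exp_atBot.comp h2
        apply this.congr
        intro t
        simp only [Function.comp]
        ring_nf
      have := h3.const_mul (2:ℝ)
      simpa using this
    have := Filter.Tendsto.congr (fun t => rfl)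
      (tendsto_finset_sum P hterm)
    simpa [hE] using this
  -- the key bound
  have key : ∀ t : ℝ, 0 < t → |NKM N t x - 1| ≤ C * E t := by
    intro t ht
    have hint : ∀ σ : Equiv.Perm (Fin N),
        Integrable (fun y : Fin N → ℝ => ∏ i, heatKernel t (x (σ i)) (y i)) :=
      fun σ => prod_heatKernel_integrable ht _
    set J : Equiv.Perm (Fin N) → ℝ :=
      fun σ => ∫ y in weylChamber N, ∏ i, heatKernel t (x (σ i)) (y i) with hJ
    have hJnn : ∀ σ, 0 ≤ J σ := by
      intro σ
      apply setIntegral_nonneg hW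
      intro y _
      exact Finset.prod_nonneg fun i _ => heatKernel_nonneg _ _ _
    have hNKM : NKM N t x = ∑ σ : Equiv.Perm (Fin N), ((Equiv.Perm.sign σ : ℤ) : ℝ) * J σ := by
      unfold NKM fKM
      have hdet : ∀ y : Fin N → ℝ,
          Matrix.det (Matrix.of fun i j => heatKernel t (x i) (y j)) =
          ∑ σ : Equiv.Perm (Fin N), ((Equiv.Perm.sign σ : ℤ) : ℝ) *
            ∏ i, heatKernel t (x (σ i)) (y i) := by
        intro y
        rw [Matrix.det_apply]
        apply Finset.sum_congr rfl
        intro σ _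
        rw [Units.smul_def, zsmul_eq_mul]
        rfl
      simp_rw [hdet]
      rw [integral_finset_sum _ (fun σ _ => ((hint σ).const_mul _).integrableOn)]
      apply Finset.sum_congr rfl
      intro σ _
      rw [MeasureTheory.integral_const_mul]
    -- bound for non-identity permutations
    have hJσ : ∀ σ : Equiv.Perm (Fin N), σ ≠ 1 → J σ ≤ E t := by
      intro σ hσ
      obtain ⟨i, j, hij, hinv⟩ := perm_exists_inversion hσ
      have hb : J σ ≤ 2 * Real.exp (-(x (σ i) - x (σ j))^2/(8*t)) := by
        apply region_bound ht (fun k => x (σ k)) (ne_of_lt hij) (hx hinv) hW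
        intro y hy
        exact le_of_lt (hy hij)
      refine hb.trans ?_
      have hmem : (σ j, σ i) ∈ P := by
        simp [hP, hinv]
      have := Finset.single_le_sum
        (f := fun p : Fin N × Fin N => 2 * Real.exp (-(x p.2 - x p.1)^2/(8*t)))
        (fun p _ => by positivity) hmem
      simpa [hE] using this
    -- identity permutation
    have hJ1 : |J 1 - 1| ≤ E t := by
      have hcompl : J 1 + ∫ y in (weylChamber N)ᶜ, ∏ i, heatKernel t (x i) (y i) = 1 := by
        have h := integral_add_compl hW (hint 1)
        simp only [hJ, Equiv.Perm.one_apply] at h ⊢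
        rw [h, prod_heatKernel_integral ht]
      have hcnn : 0 ≤ ∫ y in (weylChamber N)ᶜ, ∏ i, heatKernel t (x i) (y i) :=
        setIntegral_nonneg hW.compl
          (fun y _ => Finset.prod_nonneg fun i _ => heatKernel_nonneg _ _ _)
      have hcov : (weylChamber N)ᶜ ⊆ ⋃ p ∈ P, {y : Fin N → ℝ | y p.2 ≤ y p.1} := by
        intro y hy
        simp only [Set.mem_compl_iff, weylChamber, Set.mem_setOf_eq, StrictMono] at hy
        push_neg at hy
        obtain ⟨a, b, hab, hba⟩ := hy
        refine Set.mem_biUnion (show ((a,b) : Fin N × Fin N) ∈ P by simp [hP, hab]) ?_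
        exact hba
      have hSm : ∀ p : Fin N × Fin N, MeasurableSet {y : Fin N → ℝ | y p.2 ≤ y p.1} :=
        fun p => measurableSet_le (measurable_pi_apply _) (measurable_pi_apply _)
      have hcbound : (∫ y in (weylChamber N)ᶜ, ∏ i, heatKernel t (x i) (y i)) ≤ E t := by
        calc ∫ y in (weylChamber N)ᶜ, ∏ i, heatKernel t (x i) (y i)
            ≤ ∫ y in ⋃ p ∈ P, {y : Fin N → ℝ | y p.2 ≤ y p.1},
                ∏ i, heatKernel t (x i) (y i) := by
              apply setIntegral_mono_set (hint 1).integrableOn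
              · filter_upwards with y using
                  Finset.prod_nonneg fun i _ => heatKernel_nonneg _ _ _
              · exact HasSubset.Subset.eventuallyLE hcov
          _ ≤ ∑ p ∈ P, ∫ y in {y : Fin N → ℝ | y p.2 ≤ y p.1},
                ∏ i, heatKernel t (x i) (y i) := by
              have := setIntegral_biUnion_le (μ := volume)
                (f := fun y : Fin N → ℝ => ∏ i, heatKernel t (x i) (y i))
                (prod_heatKernel_integrable ht x)
                (fun y => Finset.prod_nonneg fun i _ => heatKernel_nonneg _ _ _)
                _ hSm P
              exact this
          _ ≤ E t := by
              rw [hE]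
              apply Finset.sum_le_sum
              intro p hp
              have hplt : p.1 < p.2 := by simpa [hP] using (Finset.mem_filter.1 hp).2
              apply region_bound ht x (ne_of_lt hplt).symm (hx hplt) (hSm p)
              exact fun y hy => hy
      rw [abs_sub_comm, abs_of_nonneg (by linarith)]
      linarith
    -- assemble
    have hsplit : NKM N t x - 1 = (J 1 - 1) +
        ∑ σ ∈ Finset.univ.erase (1 : Equiv.Perm (Fin N)),
          ((Equiv.Perm.sign σ : ℤ) : ℝ) * J σ := by
      rw [hNKM, ← Finset.add_sum_erase _ _ (Finset.mem_univ (1 : Equiv.Perm (Fin N)))]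
      simp only [Equiv.Perm.sign_one]
      push_cast
      ring
    rw [hsplit]
    calc |(J 1 - 1) + ∑ σ ∈ Finset.univ.erase (1 : Equiv.Perm (Fin N)),
            ((Equiv.Perm.sign σ : ℤ) : ℝ) * J σ|
        ≤ |J 1 - 1| + |∑ σ ∈ Finset.univ.erase (1 : Equiv.Perm (Fin N)),
            ((Equiv.Perm.sign σ : ℤ) : ℝ) * J σ| := abs_add_le _ _
      _ ≤ E t + ∑ σ ∈ Finset.univ.erase (1 : Equiv.Perm (Fin N)),
            |((Equiv.Perm.sign σ : ℤ) : ℝ) * J σ| :=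
          add_le_add hJ1 (Finset.abs_sum_le_sum_abs _ _)
      _ ≤ E t + ∑ σ ∈ Finset.univ.erase (1 : Equiv.Perm (Fin N)), E t := by
          gcongr with σ hσ
          have hσ1 : σ ≠ 1 := (Finset.mem_erase.1 hσ).1
          rw [abs_mul]
          have hs : |((Equiv.Perm.sign σ : ℤ) : ℝ)| = 1 := by
            rcases Int.units_eq_one_or (Equiv.Perm.sign σ) with h | h <;> simp [h]
          rw [hs, one_mul, abs_of_nonneg (hJnn σ)]
          exact hJσ σ hσ1
      _ ≤ C * E t := by
          rw [Finset.sum_const, nsmul_eq_mul]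
          have hcard : (Finset.univ.erase (1 : Equiv.Perm (Fin N))).card + 1 =
              Fintype.card (Equiv.Perm (Fin N)) := by
            rw [Finset.card_erase_of_mem (Finset.mem_univ _), Finset.card_univ]
            have hpos : 0 < Fintype.card (Equiv.Perm (Fin N)) := Fintype.card_pos
            omega
          have hEnn : 0 ≤ E t := by
            apply Finset.sum_nonneg; intro p _; positivity
          have hle : (1 : ℝ) + (Finset.univ.erase (1 : Equiv.Perm (Fin N))).card ≤ C := by
            rw [hC, ← hcard]
            push_cast
            linarith
          calc E t + ((Finset.univ.erase (1 : Equiv.Perm (Fin N))).card : ℝ) * E t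
              = (1 + ((Finset.univ.erase (1 : Equiv.Perm (Fin N))).card : ℝ)) * E t := by ring
            _ ≤ C * E t := mul_le_mul_of_nonneg_right hle hEnn
  -- squeeze
  have hCE : Filter.Tendsto (fun t => C * E t) (nhdsWithin 0 (Set.Ioi 0)) (nhds 0) := by
    have := hE0.const_mul C
    simpa using this
  have hdiff : Filter.Tendsto (fun t => NKM N t x - 1) (nhdsWithin 0 (Set.Ioi 0)) (nhds 0) := by
    apply squeeze_zero_norm' _ hCE
    filter_upwards [self_mem_nhdsWithin] with t ht
    exact key t ht
  have := hdiff.add_const 1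
  simpa using this
end
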